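/- Define p(x) = ∑_{j=⌈k/2⌉}^{k} l·(2j/k − 1)·C(k,j)·(1−x)^j·x^{k−j} for real x ∈ [0,1], integers k ≥ 1, l ≥ 1. If 0 ≤ x < 1/2, then p(x) ≥ l·(x^k + 1 − 2x). -/

import Mathlib

open Finset

lemma binom_one (m : ℕ) (x : ℝ) :
    ∑ j ∈ range (m+1), (m.choose j : ℝ) * (1-x)^j * x^(m-j) = 1 := by
  calc ∑ j ∈ range (m+1), (m.choose j : ℝ) * (1-x)^j * x^(m-j)
      = ∑ j ∈ range (m+1), (1-x)^j * x^(m-j) * (m.choose j : ℝ) := by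
        apply sum_congr rfl; intros; ring
    _ = ((1-x)+x)^m := (add_pow _ _ _).symm
    _ = 1 := by norm_num

lemma binom_j (m : ℕ) (x : ℝ) :
    ∑ j ∈ range (m+2), (j:ℝ) * ((m+1).choose j : ℝ) * (1-x)^j * x^(m+1-j)
      = ((m:ℝ)+1) * (1-x) := by
  rw [Finset.sum_range_succ']
  simp only [Nat.cast_zero, zero_mul, add_zero]
  have key : ∀ i ∈ range (m+1),
      ((i:ℝ)+1) * ((m+1).choose (i+1) : ℝ) * (1-x)^(i+1) * x^(m+1-(i+1))
        = ((m:ℝ)+1) * (1-x) * ((m.choose i : ℝ) * (1-x)^i * x^(m-i)) := by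
    intro i hi
    have hc : ((i:ℝ)+1) * ((m+1).choose (i+1) : ℝ) = ((m:ℝ)+1) * (m.choose i : ℝ) := by
      have h := Nat.add_one_mul_choose_eq m i
      have : ((Nat.succ m * m.choose i : ℕ) : ℝ) = (((m+1).choose (i+1) * (i+1) : ℕ) : ℝ) :=
        congrArg (fun n : ℕ => (n:ℝ)) h
      push_cast at this
      linarith
    have he : m + 1 - (i+1) = m - i := by omega
    rw [he]
    linear_combination ((1-x)^(i+1) * x^(m-i)) * hc
  have := sum_congr rfl key
  simp only [Nat.cast_succ] at this ⊢
  rw [show (∑ i ∈ range (m+1), ((i:ℝ)+1) * ((m+1).choose (i+1) : ℝ) * (1-x)^(i+1) * x^(m+1-(i+1))) = _ from this]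
  rw [← mul_sum, binom_one]
  ring

/-- For `0 ≤ x < 1/2`, `p(x) = ∑_{j=⌈k/2⌉}^{k} l·(2j/k−1)·C(k,j)·(1−x)^j·x^{k−j}`
satisfies `p(x) ≥ l·(x^k + 1 − 2x)`. -/
theorem stmt_5 (k l : ℕ) (hk : 1 ≤ k) (hl : 1 ≤ l) (x : ℝ)
    (hx0 : 0 ≤ x) (hx1 : x < 1 / 2) :
    ∑ j ∈ Finset.Icc ((k + 1) / 2) k,
        (l : ℝ) * (2 * (j : ℝ) / k - 1) * (k.choose j : ℝ) * (1 - x) ^ j * x ^ (k - j)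
      ≥ (l : ℝ) * (x ^ k + 1 - 2 * x) := by
  obtain ⟨m, rfl⟩ : ∃ m, k = m + 1 := ⟨k - 1, by omega⟩
  set g : ℕ → ℝ := fun j =>
    (2 * (j : ℝ) / ((m+1 : ℕ) : ℝ) - 1) * ((m+1).choose j : ℝ) * (1-x)^j * x^(m+1-j)
    with hg
  have hmpos : (0:ℝ) < ((m+1 : ℕ) : ℝ) := by positivity
  have hx1' : x ≤ 1 := by linarith
  -- full sum over range (m+2)
  have Tfull : ∑ j ∈ range (m+2), g j = 1 - 2*x := by
    have step : ∀ j ∈ range (m+2), g j =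
        (2 / ((m+1 : ℕ) : ℝ)) * ((j:ℝ) * ((m+1).choose j : ℝ) * (1-x)^j * x^(m+1-j))
          - ((m+1).choose j : ℝ) * (1-x)^j * x^(m+1-j) := by
      intro j hj
      rw [hg]
      field_simp
    rw [sum_congr rfl step, sum_sub_distrib, ← mul_sum, binom_j, binom_one (m+1)]
    push_cast
    field_simp
    ring
  -- sum over Ioc 0 (m+1)
  have hins : range (m+2) = insert 0 (Finset.Ioc 0 (m+1)) := by
    ext j; simp [Finset.mem_Ioc]; omega
  have hg0 : g 0 = -x^(m+1) := by simp [hg]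
  have TIoc : ∑ j ∈ Finset.Ioc 0 (m+1), g j = x^(m+1) + 1 - 2*x := by
    have := Tfull
    rw [hins, sum_insert (by simp)] at this
    rw [hg0] at this
    linarith
  -- split at c-1 where c = (m+2)/2
  set c := (m + 1 + 1) / 2 with hc
  have hcm : c - 1 ≤ m + 1 := by omega
  have hsplit := Finset.sum_Ioc_consecutive g (Nat.zero_le (c-1)) hcm
  have hIcc : Finset.Icc c (m+1) = Finset.Ioc (c-1) (m+1) := by
    ext j; simp [Finset.mem_Icc, Finset.mem_Ioc]; omega
  -- lower part nonpositive
  have hlow : ∑ j ∈ Finset.Ioc 0 (c-1), g j ≤ 0 := by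
    apply Finset.sum_nonpos
    intro j hj
    simp only [Finset.mem_Ioc] at hj
    have h2j : (2:ℝ) * (j:ℝ) ≤ ((m+1 : ℕ) : ℝ) := by
      have : 2 * j ≤ m + 1 := by omega
      exact_mod_cast this
    have ha : 2 * (j:ℝ) / ((m+1 : ℕ) : ℝ) - 1 ≤ 0 := by
      rw [sub_nonpos, div_le_one hmpos]; linarith
    have hC : (0:ℝ) ≤ ((m+1).choose j : ℝ) := by positivity
    have hp : (0:ℝ) ≤ (1-x)^j := pow_nonneg (by linarith) _
    have hq : (0:ℝ) ≤ x^(m+1-j) := by positivity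
    have h1 : (2 * (j:ℝ) / ((m+1 : ℕ) : ℝ) - 1) * ((m+1).choose j : ℝ) ≤ 0 :=
      mul_nonpos_iff.mpr (Or.inr ⟨ha, hC⟩)
    have h2 := mul_nonpos_iff.mpr (Or.inr ⟨h1, hp⟩)
    exact mul_nonpos_iff.mpr (Or.inr ⟨h2, hq⟩)
  have hmain : ∑ j ∈ Finset.Icc c (m+1), g j ≥ x^(m+1) + 1 - 2*x := by
    rw [hIcc]
    have : ∑ j ∈ Finset.Ioc 0 (c-1), g j + ∑ j ∈ Finset.Ioc (c-1) (m+1), g j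
        = x^(m+1) + 1 - 2*x := by rw [hsplit, TIoc]
    linarith
  -- conclude
  have hlrw : ∀ j ∈ Finset.Icc c (m+1),
      (l : ℝ) * (2 * (j : ℝ) / ((m+1:ℕ):ℝ) - 1) * ((m+1).choose j : ℝ) * (1 - x) ^ j * x ^ (m+1 - j)
        = (l:ℝ) * g j := by
    intro j hj; rw [hg]; ring
  calc ∑ j ∈ Finset.Icc c (m+1),
        (l : ℝ) * (2 * (j : ℝ) / ((m+1:ℕ):ℝ) - 1) * ((m+1).choose j : ℝ) * (1 - x) ^ j * x ^ (m+1 - j)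
      = (l:ℝ) * ∑ j ∈ Finset.Icc c (m+1), g j := by rw [sum_congr rfl hlrw, ← mul_sum]
    _ ≥ (l:ℝ) * (x ^ (m+1) + 1 - 2 * x) := by
        apply mul_le_mul_of_nonneg_left hmain (by positivity)
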